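/- arXiv:2011.09981 — 3 statements merged into one kernel-verified Lean document; each statement's English description precedes it below -/
import Mathlib

section
/- Under the conditions S_I–S_IV on the sequence of random vectors of random length, for every n ≥ 2, every real x ≥ c₁ and every Δ > 0, the following identity holds: P( Z₊(n) + u_{ν₊(n)+1, γ₊(n)} ∈ [x, x+Δ) and τ₁ ≤ n ) = Q · P( Z*₊(n) ∈ [x, x+Δ) and γ*₊(n) = 0 ). -/
open MeasureTheory ProbabilityTheory Filter Real Set
open scoped ENNReal Topology

noncomputable section

namespace CompoundRenewal

/-- A sequence `{(τ_k, (u_{k,1}, …, u_{k,τ_k}))}_{k ≥ 1}` of mutually independent random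
vectors of random length satisfying conditions `S_I`–`S_IV`, together with the auxiliary
independent vector `(τ*, ζ*)` whose distribution is
`P(τ* = i, ζ* ∈ dy) = (1/Q) P(τ ≥ i + 1, u_i ∈ dy)`, `Q = E τ`.
The vector of index `k` is encoded as the pair `(τ_k, (u_{k,i})_{i ≤ τ_k})`, where the
array is extended by `0` for `i > τ_k` (and `u_{k,0} = 0`). -/
structure CRP (Ω : Type) [MeasureSpace Ω] where
  /-- the constant `c₁ > 0` of condition `S_II` -/
  c₁ : ℝ
  c₁_pos : 0 < c₁
  /-- the lengths `τ_k`, `k ≥ 1` (positive integers) -/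
  tauSeq : ℕ → Ω → ℕ
  /-- the weights `u_{k,i}`, `k ≥ 1`, `0 ≤ i ≤ τ_k` -/
  uSeq : ℕ → ℕ → Ω → ℝ
  tau_pos : ∀ k ω, 1 ≤ tauSeq k ω
  u_zero : ∀ k ω, uSeq k 0 ω = 0
  tau_meas : ∀ k, Measurable (tauSeq k)
  u_meas : ∀ k i, Measurable (uSeq k i)
  /-- `S_I` : mutual independence of the vectors of indices `k ≥ 1` -/
  indep : iIndepFun
    (fun k : ℕ => fun ω => ((tauSeq (k + 1) ω : ℕ),
      fun i : ℕ => if i ≤ tauSeq (k + 1) ω then uSeq (k + 1) i ω else 0)) ℙ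
  /-- `S_I` : the vectors of indices `k ≥ 2` are identically distributed -/
  ident : ∀ k : ℕ, 2 ≤ k →
    Measure.map (fun ω => ((tauSeq k ω : ℕ),
        fun i : ℕ => if i ≤ tauSeq k ω then uSeq k i ω else 0)) ℙ
      = Measure.map (fun ω => ((tauSeq 2 ω : ℕ),
        fun i : ℕ => if i ≤ tauSeq 2 ω then uSeq 2 i ω else 0)) ℙ
  /-- `S_II` : positivity, the lower bound `c₁` and the maximality of the last weight -/
  sII : ∀ᵐ ω ∂ℙ, 0 < uSeq 1 (tauSeq 1 ω) ω ∧
    ∀ k : ℕ, 2 ≤ k → ∀ i : ℕ, 1 ≤ i → i ≤ tauSeq k ω →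
      c₁ ≤ uSeq k i ω ∧ uSeq k i ω ≤ uSeq k (tauSeq k ω) ω
  /-- `S_III` : exponential moments -/
  sIII : ∃ C : ℝ, 0 < C ∧
    (∫⁻ ω, ENNReal.ofReal (Real.exp (C * (tauSeq 1 ω : ℝ))) ∂ℙ < ⊤) ∧
    (∫⁻ ω, ENNReal.ofReal (Real.exp (C * (tauSeq 2 ω : ℝ))) ∂ℙ < ⊤) ∧
    (∫⁻ ω, ENNReal.ofReal (Real.exp (C * uSeq 1 (tauSeq 1 ω) ω)) ∂ℙ < ⊤) ∧
    (∫⁻ ω, ENNReal.ofReal (Real.exp (C * uSeq 2 (tauSeq 2 ω) ω)) ∂ℙ < ⊤)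
  /-- `S_IV` : `P(τ = 1, u_τ ≥ y) > 0` for all `y` in some nonempty interval -/
  sIV : ∃ y₀ y₁ : ℝ, y₀ < y₁ ∧ ∀ y ∈ Set.Ioo y₀ y₁,
    0 < ℙ {ω | tauSeq 2 ω = 1 ∧ y ≤ uSeq 2 (tauSeq 2 ω) ω}
  /-- the auxiliary vector `(τ*, ζ*)` -/
  tauStar : Ω → ℕ
  zetaStar : Ω → ℝ
  tauStar_meas : Measurable tauStar
  zetaStar_meas : Measurable zetaStar
  /-- `(τ*, ζ*)` is independent of the whole sequence -/
  star_indep : IndepFun (fun ω => (tauStar ω, zetaStar ω))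
    (fun ω => fun k : ℕ => ((tauSeq (k + 1) ω : ℕ),
      fun i : ℕ => if i ≤ tauSeq (k + 1) ω then uSeq (k + 1) i ω else 0)) ℙ
  /-- the distribution of `(τ*, ζ*)` : `Q·P(τ* = i, ζ* ∈ s) = P(τ ≥ i + 1, u_i ∈ s)` -/
  star_dist : ∀ i : ℕ, ∀ s : Set ℝ, MeasurableSet s →
    ENNReal.ofReal (∫ ω, (tauSeq 2 ω : ℝ) ∂ℙ) * ℙ {ω | tauStar ω = i ∧ zetaStar ω ∈ s}
      = ℙ {ω | i + 1 ≤ tauSeq 2 ω ∧ uSeq 2 i ω ∈ s}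

variable {Ω : Type} [MeasureSpace Ω]

/-- `ζ_k = u_{k, τ_k}`. -/
def zetaSeq (P : CRP Ω) (k : ℕ) (ω : Ω) : ℝ := P.uSeq k (P.tauSeq k ω) ω

/-- `T_n = τ_1 + ⋯ + τ_n` (with `T_0 = 0`). -/
def Tn (P : CRP Ω) (n : ℕ) (ω : Ω) : ℕ := ∑ k ∈ Finset.Icc 1 n, P.tauSeq k ω

/-- `Z_n = ζ_1 + ⋯ + ζ_n` (with `Z_0 = 0`). -/
def Zn (P : CRP Ω) (n : ℕ) (ω : Ω) : ℝ := ∑ k ∈ Finset.Icc 1 n, zetaSeq P k ω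

/-- `ν₊(n) = max {k ≥ 0 : T_k ≤ n}`. -/
def nuP (P : CRP Ω) (n : ℕ) (ω : Ω) : ℕ := Nat.findGreatest (fun k => Tn P k ω ≤ n) n

/-- `γ₊(n) = n - T_{ν₊(n)}`. -/
def gamP (P : CRP Ω) (n : ℕ) (ω : Ω) : ℕ := n - Tn P (nuP P n ω) ω

/-- The compound renewal process `Z₊(n) = Z_{ν₊(n)}`. -/
def ZP (P : CRP Ω) (n : ℕ) (ω : Ω) : ℝ := Zn P (nuP P n ω) ω

/-- `Q = E τ`. -/
def Q (P : CRP Ω) : ℝ := ∫ ω, (P.tauSeq 2 ω : ℝ) ∂ℙ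

/-- The modified lengths: `τ*₁ = τ₁ + τ*`, `τ*_k = τ_k` for `k ≥ 2`. -/
def tauSt (P : CRP Ω) (k : ℕ) (ω : Ω) : ℕ :=
  if k = 1 then P.tauSeq 1 ω + P.tauStar ω else P.tauSeq k ω

/-- The modified weights: `ζ*₁ = ζ₁ + ζ*`, `ζ*_k = ζ_k` for `k ≥ 2`. -/
def zetaSt (P : CRP Ω) (k : ℕ) (ω : Ω) : ℝ :=
  if k = 1 then zetaSeq P 1 ω + P.zetaStar ω else zetaSeq P k ω

/-- `T*_n`. -/
def TnSt (P : CRP Ω) (n : ℕ) (ω : Ω) : ℕ := ∑ k ∈ Finset.Icc 1 n, tauSt P k ω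

/-- `Z*_n`. -/
def ZnSt (P : CRP Ω) (n : ℕ) (ω : Ω) : ℝ := ∑ k ∈ Finset.Icc 1 n, zetaSt P k ω

/-- `ν*₊(n)`. -/
def nuPSt (P : CRP Ω) (n : ℕ) (ω : Ω) : ℕ := Nat.findGreatest (fun k => TnSt P k ω ≤ n) n

/-- `γ*₊(n) = n - T*_{ν*₊(n)}`. -/
def gamPSt (P : CRP Ω) (n : ℕ) (ω : Ω) : ℕ := n - TnSt P (nuPSt P n ω) ω

/-- The modified compound renewal process `Z*₊(n) = Z*_{ν*₊(n)}`. -/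
def ZPSt (P : CRP Ω) (n : ℕ) (ω : Ω) : ℝ := ZnSt P (nuPSt P n ω) ω



/-! ### Auxiliary material for the proof -/

section Aux

lemma measurable_eval_nat : Measurable (fun q : (ℕ → ℝ) × ℕ => q.1 q.2) :=
  measurable_from_prod_countable_left fun y => measurable_pi_apply y

lemma measurable_apply_self : Measurable (fun p : ℕ × (ℕ → ℝ) => p.2 p.1) :=
  measurable_eval_nat.comp measurable_swap

lemma zeta_meas (P : CRP Ω) (k : ℕ) : Measurable (zetaSeq P k) := by
  have : zetaSeq P k = (fun q : (ℕ → ℝ) × ℕ => q.1 q.2) ∘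
      (fun ω => (fun i => P.uSeq k i ω, P.tauSeq k ω)) := rfl
  rw [this]
  exact measurable_eval_nat.comp
    ((measurable_pi_lambda _ fun i => P.u_meas k i).prodMk (P.tau_meas k))

lemma Tn_meas (P : CRP Ω) (m : ℕ) : Measurable (Tn P m) :=
  Finset.measurable_sum _ fun k _ => P.tau_meas k

lemma Zn_meas (P : CRP Ω) (m : ℕ) : Measurable (Zn P m) :=
  Finset.measurable_sum _ fun k _ => zeta_meas P k

lemma sum_Icc_one_succ {M : Type*} [AddCommMonoid M] (g : ℕ → M) (m : ℕ) :
    ∑ k ∈ Finset.Icc 1 (m + 1), g k = ∑ k ∈ Finset.Icc 1 m, g k + g (m + 1) := by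
  rw [← Finset.insert_Icc_right_eq_Icc_add_one (by omega : 1 ≤ m + 1),
    Finset.sum_insert (by simp [Finset.mem_Icc])]
  exact add_comm _ _

lemma sum_Icc_one_split {M : Type*} [AddCommMonoid M] (g : ℕ → M) {m : ℕ} (hm : 1 ≤ m) :
    ∑ k ∈ Finset.Icc 1 m, g k = g 1 + ∑ k ∈ Finset.Icc 2 m, g k := by
  rw [← Finset.insert_Icc_add_one_left_eq_Icc hm, Finset.sum_insert (by simp [Finset.mem_Icc])]
  rfl

lemma Tn_zero (P : CRP Ω) (ω : Ω) : Tn P 0 ω = 0 := by simp [Tn]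

lemma Tn_succ (P : CRP Ω) (m : ℕ) (ω : Ω) :
    Tn P (m + 1) ω = Tn P m ω + P.tauSeq (m + 1) ω := sum_Icc_one_succ _ m

lemma Tn_mono (P : CRP Ω) (ω : Ω) {a b : ℕ} (hab : a ≤ b) : Tn P a ω ≤ Tn P b ω :=
  Finset.sum_le_sum_of_subset (Finset.Icc_subset_Icc_right hab)

lemma Tn_strictMono (P : CRP Ω) (ω : Ω) : StrictMono (fun m => Tn P m ω) := by
  apply strictMono_nat_of_lt_succ
  intro m
  have := P.tau_pos (m + 1) ω
  have h := Tn_succ P m ω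
  omega

lemma le_Tn (P : CRP Ω) (m : ℕ) (ω : Ω) : m ≤ Tn P m ω := by
  induction m with
  | zero => simp [Tn]
  | succ k ih =>
    have := P.tau_pos (k + 1) ω
    have h := Tn_succ P k ω
    omega

lemma Tn_range (P : CRP Ω) (m : ℕ) (ω : Ω) :
    Tn P m ω = ∑ j ∈ Finset.range m, P.tauSeq (j + 1) ω := by
  induction m with
  | zero => simp [Tn]
  | succ k ih => rw [Tn_succ, ih, Finset.sum_range_succ]

lemma Zn_range (P : CRP Ω) (m : ℕ) (ω : Ω) :
    Zn P m ω = ∑ j ∈ Finset.range m, zetaSeq P (j + 1) ω := by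
  induction m with
  | zero => simp [Zn]
  | succ k ih =>
    unfold Zn at *
    rw [sum_Icc_one_succ _ k, ih, Finset.sum_range_succ]

/-- generic characterization of `Nat.findGreatest` for a strictly monotone `f` with `f 0 = 0`. -/
lemma findGreatest_eq_of (f : ℕ → ℕ) (hf : StrictMono f) {n m : ℕ}
    (h1 : f m ≤ n) (h2 : n < f (m + 1)) :
    Nat.findGreatest (fun k => f k ≤ n) n = m := by
  have hle : ∀ k, k ≤ f k := fun k => by
    induction k with
    | zero => omega
    | succ j ih => have := hf (by omega : j < j + 1); omega
  have hmn : m ≤ n := (hle m).trans h1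
  refine le_antisymm ?_ (Nat.le_findGreatest hmn h1)
  by_contra hlt
  push_neg at hlt
  have hgle : Nat.findGreatest (fun k => f k ≤ n) n ≤ n := Nat.findGreatest_le n
  have hP : f (Nat.findGreatest (fun k => f k ≤ n) n) ≤ n :=
    Nat.findGreatest_of_ne_zero (P := fun k => f k ≤ n) (n := n) rfl (by omega)
  have : f (m + 1) ≤ f (Nat.findGreatest (fun k => f k ≤ n) n) := hf.monotone (by omega)
  omega

lemma findGreatest_spec_of (f : ℕ → ℕ) (hf : StrictMono f) (hf0 : f 0 = 0) (n : ℕ) :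
    f (Nat.findGreatest (fun k => f k ≤ n) n) ≤ n ∧
      n < f (Nat.findGreatest (fun k => f k ≤ n) n + 1) := by
  have hle : ∀ k, k ≤ f k := fun k => by
    induction k with
    | zero => omega
    | succ j ih => have := hf (by omega : j < j + 1); omega
  constructor
  · rcases Nat.eq_zero_or_pos (Nat.findGreatest (fun k => f k ≤ n) n) with h | h
    · rw [h, hf0]; exact Nat.zero_le n
    · exact Nat.findGreatest_of_ne_zero (P := fun k => f k ≤ n) (n := n) rfl (by omega)
  · by_cases h : Nat.findGreatest (fun k => f k ≤ n) n + 1 ≤ n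
    · have h3 : ¬ f (Nat.findGreatest (fun k => f k ≤ n) n + 1) ≤ n :=
        Nat.findGreatest_is_greatest (P := fun k => f k ≤ n) (n := n) (by omega) h
      omega
    · have h2 := hle (Nat.findGreatest (fun k => f k ≤ n) n + 1)
      omega

lemma nuP_eq (P : CRP Ω) {n m : ℕ} {ω : Ω} (h1 : Tn P m ω ≤ n) (h2 : n < Tn P (m + 1) ω) :
    nuP P n ω = m :=
  findGreatest_eq_of _ (Tn_strictMono P ω) h1 h2

lemma nuP_spec (P : CRP Ω) (n : ℕ) (ω : Ω) :
    Tn P (nuP P n ω) ω ≤ n ∧ n < Tn P (nuP P n ω + 1) ω :=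
  findGreatest_spec_of _ (Tn_strictMono P ω) (Tn_zero P ω) n

lemma tauSt_pos (P : CRP Ω) (k : ℕ) (ω : Ω) : 1 ≤ tauSt P k ω := by
  unfold tauSt
  split
  · have := P.tau_pos 1 ω; omega
  · exact P.tau_pos k ω

lemma TnSt_zero (P : CRP Ω) (ω : Ω) : TnSt P 0 ω = 0 := by simp [TnSt]

lemma TnSt_succ (P : CRP Ω) (m : ℕ) (ω : Ω) :
    TnSt P (m + 1) ω = TnSt P m ω + tauSt P (m + 1) ω := sum_Icc_one_succ _ m

lemma TnSt_strictMono (P : CRP Ω) (ω : Ω) : StrictMono (fun m => TnSt P m ω) := by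
  apply strictMono_nat_of_lt_succ
  intro m
  have := tauSt_pos P (m + 1) ω
  have h := TnSt_succ P m ω
  omega

lemma nuPSt_eq (P : CRP Ω) {n m : ℕ} {ω : Ω} (h1 : TnSt P m ω ≤ n)
    (h2 : n < TnSt P (m + 1) ω) : nuPSt P n ω = m :=
  findGreatest_eq_of _ (TnSt_strictMono P ω) h1 h2

lemma nuPSt_spec (P : CRP Ω) (n : ℕ) (ω : Ω) :
    TnSt P (nuPSt P n ω) ω ≤ n ∧ n < TnSt P (nuPSt P n ω + 1) ω :=
  findGreatest_spec_of _ (TnSt_strictMono P ω) (TnSt_zero P ω) n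

lemma TnSt_eq (P : CRP Ω) {m : ℕ} (hm : 1 ≤ m) (ω : Ω) :
    TnSt P m ω = Tn P m ω + P.tauStar ω := by
  unfold TnSt Tn
  rw [sum_Icc_one_split _ hm, sum_Icc_one_split (fun k => P.tauSeq k ω) hm]
  have h2 : ∀ k ∈ Finset.Icc 2 m, tauSt P k ω = P.tauSeq k ω := by
    intro k hk
    rw [Finset.mem_Icc] at hk
    unfold tauSt
    rw [if_neg (by omega)]
  rw [Finset.sum_congr rfl h2]
  unfold tauSt
  rw [if_pos rfl]
  omega

lemma ZnSt_eq (P : CRP Ω) {m : ℕ} (hm : 1 ≤ m) (ω : Ω) :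
    ZnSt P m ω = Zn P m ω + P.zetaStar ω := by
  unfold ZnSt Zn
  rw [sum_Icc_one_split _ hm, sum_Icc_one_split (fun k => zetaSeq P k ω) hm]
  have h2 : ∀ k ∈ Finset.Icc 2 m, zetaSt P k ω = zetaSeq P k ω := by
    intro k hk
    rw [Finset.mem_Icc] at hk
    unfold zetaSt
    rw [if_neg (by omega)]
  rw [Finset.sum_congr rfl h2]
  unfold zetaSt
  rw [if_pos rfl]
  ring

end Aux

section Core

/-- The elementary events decomposing the left-hand side. -/
def ASet (P : CRP Ω) (n : ℕ) (x Δ : ℝ) (p : ℕ × ℕ) : Set Ω :=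
  {ω | Tn P p.1 ω + p.2 = n ∧ p.2 + 1 ≤ P.tauSeq (p.1 + 1) ω ∧
    Zn P p.1 ω + P.uSeq (p.1 + 1) p.2 ω ∈ Set.Ico x (x + Δ)}

/-- The elementary events decomposing the right-hand side. -/
def BSet (P : CRP Ω) (n : ℕ) (x Δ : ℝ) (p : ℕ × ℕ) : Set Ω :=
  {ω | Tn P p.1 ω + p.2 = n ∧ P.tauStar ω = p.2 ∧
    Zn P p.1 ω + P.zetaStar ω ∈ Set.Ico x (x + Δ)}

lemma ASet_nu (P : CRP Ω) {n : ℕ} {x Δ : ℝ} {p : ℕ × ℕ} {ω : Ω}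
    (h : ω ∈ ASet P n x Δ p) : nuP P n ω = p.1 ∧ gamP P n ω = p.2 := by
  obtain ⟨h1, h2, _⟩ := h
  have hT : Tn P p.1 ω ≤ n := by omega
  have hT2 : n < Tn P (p.1 + 1) ω := by
    have := Tn_succ P p.1 ω
    omega
  have hnu := nuP_eq P hT hT2
  refine ⟨hnu, ?_⟩
  unfold gamP
  rw [hnu]
  omega

lemma BSet_nu (P : CRP Ω) {n : ℕ} {x Δ : ℝ} {p : ℕ × ℕ} {ω : Ω} (hm : 1 ≤ p.1)
    (h : ω ∈ BSet P n x Δ p) : nuPSt P n ω = p.1 ∧ gamPSt P n ω = 0 := by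
  obtain ⟨h1, h2, _⟩ := h
  have hT : TnSt P p.1 ω = n := by rw [TnSt_eq P hm]; omega
  have hT2 : n < TnSt P (p.1 + 1) ω := by
    have hs := TnSt_succ P p.1 ω
    have := tauSt_pos P (p.1 + 1) ω
    omega
  have hnu := nuPSt_eq P (le_of_eq hT) hT2
  refine ⟨hnu, ?_⟩
  unfold gamPSt
  rw [hnu]
  omega

lemma ASet_meas (P : CRP Ω) (n : ℕ) (x Δ : ℝ) (p : ℕ × ℕ) :
    MeasurableSet (ASet P n x Δ p) := by
  have h : ASet P n x Δ p = (Tn P p.1) ⁻¹' {k | k + p.2 = n} ∩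
      ((P.tauSeq (p.1 + 1)) ⁻¹' {k | p.2 + 1 ≤ k} ∩
        (fun ω => Zn P p.1 ω + P.uSeq (p.1 + 1) p.2 ω) ⁻¹' Set.Ico x (x + Δ)) := rfl
  rw [h]
  exact ((Tn_meas P p.1) .of_discrete).inter (((P.tau_meas _) .of_discrete).inter
    (((Zn_meas P p.1).add (P.u_meas _ _)) measurableSet_Ico))

lemma BSet_meas (P : CRP Ω) (n : ℕ) (x Δ : ℝ) (p : ℕ × ℕ) :
    MeasurableSet (BSet P n x Δ p) := by
  have h : BSet P n x Δ p = (Tn P p.1) ⁻¹' {k | k + p.2 = n} ∩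
      ((P.tauStar) ⁻¹' {k | k = p.2} ∩
        (fun ω => Zn P p.1 ω + P.zetaStar ω) ⁻¹' Set.Ico x (x + Δ)) := rfl
  rw [h]
  exact ((Tn_meas P p.1) .of_discrete).inter ((P.tauStar_meas .of_discrete).inter
    (((Zn_meas P p.1).add P.zetaStar_meas) measurableSet_Ico))

lemma union_A (P : CRP Ω) (n : ℕ) (hn : 2 ≤ n) (x Δ : ℝ) :
    {ω | (ZP P n ω + P.uSeq (nuP P n ω + 1) (gamP P n ω) ω ∈ Set.Ico x (x + Δ)) ∧
        P.tauSeq 1 ω ≤ n}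
      = ⋃ p ∈ Finset.Icc 1 n ×ˢ Finset.range (n + 1), ASet P n x Δ p := by
  ext ω
  simp only [Set.mem_setOf_eq, Set.mem_iUnion, Finset.mem_coe, Finset.mem_product,
    Finset.mem_Icc, Finset.mem_range, exists_prop]
  constructor
  · rintro ⟨hZ, ht⟩
    have hspec := nuP_spec P n ω
    have hT1 : Tn P 1 ω = P.tauSeq 1 ω := by simp [Tn]
    have hm1 : 1 ≤ nuP P n ω :=
      Nat.le_findGreatest (by omega) (by rw [hT1]; exact ht)
    have hmn : nuP P n ω ≤ n := Nat.findGreatest_le n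
    have hsucc := Tn_succ P (nuP P n ω) ω
    have hgam : gamP P n ω = n - Tn P (nuP P n ω) ω := rfl
    refine ⟨(nuP P n ω, gamP P n ω), ⟨⟨hm1, hmn⟩, by omega⟩, ?_, ?_, ?_⟩
    · simp only
      omega
    · simp only
      omega
    · exact hZ
  · rintro ⟨⟨m, i⟩, ⟨⟨hm1, hmn⟩, hi⟩, hωA⟩
    have hnu := ASet_nu P hωA
    obtain ⟨h1, h2, h3⟩ := hωA
    dsimp only at h1 h2 h3 hnu hm1 hmn hi
    constructor
    · show Zn P (nuP P n ω) ω + P.uSeq (nuP P n ω + 1) (gamP P n ω) ω ∈ Set.Ico x (x + Δ)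
      rw [hnu.1, hnu.2]
      exact h3
    · have hT1 : Tn P 1 ω = P.tauSeq 1 ω := by simp [Tn]
      have := Tn_mono P ω hm1
      omega

lemma union_B (P : CRP Ω) (n : ℕ) (hn : 2 ≤ n) (x Δ : ℝ) :
    {ω | ZPSt P n ω ∈ Set.Ico x (x + Δ) ∧ gamPSt P n ω = 0}
      = ⋃ p ∈ Finset.Icc 1 n ×ˢ Finset.range (n + 1), BSet P n x Δ p := by
  ext ω
  simp only [Set.mem_setOf_eq, Set.mem_iUnion, Finset.mem_coe, Finset.mem_product,
    Finset.mem_Icc, Finset.mem_range, exists_prop]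
  constructor
  · rintro ⟨hZ, hg⟩
    have hspec := nuPSt_spec P n ω
    have hgam : gamPSt P n ω = n - TnSt P (nuPSt P n ω) ω := rfl
    have hTeq : TnSt P (nuPSt P n ω) ω = n := by omega
    have hm1 : 1 ≤ nuPSt P n ω := by
      rcases Nat.eq_zero_or_pos (nuPSt P n ω) with h0 | h
      · exfalso
        rw [h0, TnSt_zero] at hTeq
        omega
      · exact h
    have hmn : nuPSt P n ω ≤ n := Nat.findGreatest_le n
    have hTst := TnSt_eq P hm1 ω
    refine ⟨(nuPSt P n ω, P.tauStar ω), ⟨⟨hm1, hmn⟩, by omega⟩, ?_, rfl, ?_⟩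
    · simp only
      omega
    · show Zn P (nuPSt P n ω) ω + P.zetaStar ω ∈ Set.Ico x (x + Δ)
      rw [← ZnSt_eq P hm1]
      exact hZ
  · rintro ⟨⟨m, i⟩, ⟨⟨hm1, hmn⟩, hi⟩, hωB⟩
    have hnu := BSet_nu P hm1 hωB
    obtain ⟨h1, h2, h3⟩ := hωB
    dsimp only at h1 h2 h3 hnu hm1 hmn hi
    constructor
    · show ZnSt P (nuPSt P n ω) ω ∈ Set.Ico x (x + Δ)
      rw [hnu.1, ZnSt_eq P hm1]
      exact h3
    · exact hnu.2

end Core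


section Key

lemma key_identity (P : CRP Ω) [IsProbabilityMeasure (ℙ : Measure Ω)] (n : ℕ) (x Δ : ℝ)
    (m i : ℕ) (hm : 1 ≤ m) :
    ℙ (ASet P n x Δ (m, i)) = ENNReal.ofReal (Q P) * ℙ (BSet P n x Δ (m, i)) := by
  classical
  -- the random vectors
  set f : ℕ → Ω → ℕ × (ℕ → ℝ) := fun k ω => ((P.tauSeq (k + 1) ω : ℕ),
    fun j : ℕ => if j ≤ P.tauSeq (k + 1) ω then P.uSeq (k + 1) j ω else 0) with hfdef
  have hf_meas : ∀ k : ℕ, Measurable (f k) := by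
    intro k
    refine (P.tau_meas (k + 1)).prodMk (measurable_pi_lambda _ fun j =>
      Measurable.ite ?_ (P.u_meas (k + 1) j) measurable_const)
    exact (P.tau_meas (k + 1)) .of_discrete
  set X : Ω → ℕ × ℝ := fun ω => (Tn P m ω, Zn P m ω) with hXdef
  have hX : Measurable X := (Tn_meas P m).prodMk (Zn_meas P m)
  have hY : Measurable (f m) := hf_meas m
  set V : Ω → ℕ × ℝ := fun ω => (P.tauStar ω, P.zetaStar ω) with hVdef
  have hV : Measurable V := P.tauStar_meas.prodMk P.zetaStar_meas
  -- X is a measurable function of the first m vectors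
  have hXsum : ∀ (g : ℕ → ℕ × (ℕ → ℝ)) (ω : Ω), (∀ j, j < m → g j = f j ω) →
      ((∑ j ∈ Finset.range m, (g j).1 : ℕ), (∑ j ∈ Finset.range m, (g j).2 ((g j).1) : ℝ))
        = X ω := by
    intro g ω hg
    have h1 : ∑ j ∈ Finset.range m, (g j).1 = Tn P m ω := by
      rw [Tn_range]
      refine Finset.sum_congr rfl fun j hj => ?_
      rw [hg j (Finset.mem_range.mp hj), hfdef]
    have h2 : ∑ j ∈ Finset.range m, (g j).2 ((g j).1) = Zn P m ω := by
      rw [Zn_range]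
      refine Finset.sum_congr rfl fun j hj => ?_
      rw [hg j (Finset.mem_range.mp hj), hfdef]
      simp only [le_refl, if_true]
      rfl
    rw [h1, h2, hXdef]
  -- independence of X and the (m+1)-st vector
  have hXY : IndepFun X (f m) ℙ := by
    have hiid : iIndepFun f ℙ := P.indep
    have h := hiid.indepFun_finset (Finset.range m) {m} (by simp) hf_meas
    set φ : (↥(Finset.range m) → ℕ × (ℕ → ℝ)) → ℕ × ℝ :=
      fun g => ((∑ j, (g j).1 : ℕ), (∑ j, (g j).2 ((g j).1) : ℝ)) with hφdef
    have hφ : Measurable φ :=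
      (Finset.measurable_sum _ fun j _ => (measurable_pi_apply j).fst).prodMk
        (Finset.measurable_sum _ fun j _ => measurable_apply_self.comp (measurable_pi_apply j))
    have hmm : m ∈ ({m} : Finset ℕ) := Finset.mem_singleton_self m
    have hψ : Measurable (fun g : (↥({m} : Finset ℕ) → ℕ × (ℕ → ℝ)) => g ⟨m, hmm⟩) :=
      measurable_pi_apply _
    have h2 := h.comp hφ hψ
    have hval : ∀ ω : Ω, φ (fun j : ↥(Finset.range m) => f (↑j) ω) = X ω := by
      intro ω
      have h1 : ∑ j : ↥(Finset.range m), (f (↑j) ω).1 = ∑ j ∈ Finset.range m, (f j ω).1 :=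
        Finset.sum_coe_sort (Finset.range m) (fun k => (f k ω).1)
      have h2' : ∑ j : ↥(Finset.range m), (f (↑j) ω).2 ((f (↑j) ω).1)
          = ∑ j ∈ Finset.range m, (f j ω).2 ((f j ω).1) :=
        Finset.sum_coe_sort (Finset.range m) (fun k => (f k ω).2 ((f k ω).1))
      show ((∑ j : ↥(Finset.range m), (f (↑j) ω).1 : ℕ),
        (∑ j : ↥(Finset.range m), (f (↑j) ω).2 ((f (↑j) ω).1) : ℝ)) = X ω
      rw [h1, h2']
      exact hXsum (fun k => f k ω) ω (fun j _ => rfl)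
    exact h2.congr (Filter.Eventually.of_forall fun ω => hval ω)
      (Filter.Eventually.of_forall fun ω => rfl)
  -- independence of X and (τ*, ζ*)
  have hXV : IndepFun X V ℙ := by
    have h : IndepFun V (fun ω => fun k : ℕ => f k ω) ℙ := P.star_indep
    set φ₂ : (ℕ → ℕ × (ℕ → ℝ)) → ℕ × ℝ :=
      fun g => ((∑ j ∈ Finset.range m, (g j).1 : ℕ),
        (∑ j ∈ Finset.range m, (g j).2 ((g j).1) : ℝ)) with hφ₂def
    have hφ₂ : Measurable φ₂ :=
      (Finset.measurable_sum _ fun j _ => (measurable_pi_apply j).fst).prodMk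
        (Finset.measurable_sum _ fun j _ => measurable_apply_self.comp (measurable_pi_apply j))
    have h2 := (h.comp measurable_id hφ₂).symm
    exact h2.congr
      (Filter.Eventually.of_forall fun ω => hXsum (fun k => f k ω) ω (fun j _ => rfl))
      (Filter.Eventually.of_forall fun ω => rfl)
  -- the target sets in product space
  set S : Set ((ℕ × ℝ) × (ℕ × (ℕ → ℝ))) :=
    {p | p.1.1 + i = n ∧ i + 1 ≤ p.2.1 ∧ p.1.2 + p.2.2 i ∈ Set.Ico x (x + Δ)} with hSdef
  have hS : MeasurableSet S := by
    have hmeas3 : Measurable (fun p : (ℕ × ℝ) × (ℕ × (ℕ → ℝ)) => p.1.2 + p.2.2 i) := by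
      apply Measurable.add
      · exact measurable_fst.snd
      · exact (measurable_pi_apply i).comp measurable_snd.snd
    have h : S = (fun p : (ℕ × ℝ) × (ℕ × (ℕ → ℝ)) => p.1.1) ⁻¹' {k | k + i = n} ∩
        ((fun p : (ℕ × ℝ) × (ℕ × (ℕ → ℝ)) => p.2.1) ⁻¹' {k | i + 1 ≤ k} ∩
          (fun p : (ℕ × ℝ) × (ℕ × (ℕ → ℝ)) => p.1.2 + p.2.2 i) ⁻¹' Set.Ico x (x + Δ)) := rfl
    rw [h]
    exact (measurable_fst.fst .of_discrete).inter ((measurable_snd.fst .of_discrete).inter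
      (hmeas3 measurableSet_Ico))
  set S' : Set ((ℕ × ℝ) × (ℕ × ℝ)) :=
    {p | p.1.1 + i = n ∧ p.2.1 = i ∧ p.1.2 + p.2.2 ∈ Set.Ico x (x + Δ)} with hS'def
  have hS' : MeasurableSet S' := by
    have hmeas3 : Measurable (fun p : (ℕ × ℝ) × (ℕ × ℝ) => p.1.2 + p.2.2) := by
      apply Measurable.add
      · exact measurable_fst.snd
      · exact measurable_snd.snd
    have h : S' = (fun p : (ℕ × ℝ) × (ℕ × ℝ) => p.1.1) ⁻¹' {k | k + i = n} ∩
        ((fun p : (ℕ × ℝ) × (ℕ × ℝ) => p.2.1) ⁻¹' {k | k = i} ∩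
          (fun p : (ℕ × ℝ) × (ℕ × ℝ) => p.1.2 + p.2.2) ⁻¹' Set.Ico x (x + Δ)) := rfl
    rw [h]
    exact (measurable_fst.fst .of_discrete).inter ((measurable_snd.fst .of_discrete).inter
      (hmeas3 measurableSet_Ico))
  -- identification of the events
  have hAS : ASet P n x Δ (m, i) = (fun ω => (X ω, f m ω)) ⁻¹' S := by
    ext ω
    simp only [ASet, hSdef, Set.mem_setOf_eq, Set.mem_preimage, hXdef, hfdef]
    constructor
    · rintro ⟨h1, h2, h3⟩
      exact ⟨h1, h2, by rw [if_pos (by omega)]; exact h3⟩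
    · rintro ⟨h1, h2, h3⟩
      rw [if_pos (by omega)] at h3
      exact ⟨h1, h2, h3⟩
  have hBS : BSet P n x Δ (m, i) = (fun ω => (X ω, V ω)) ⁻¹' S' := rfl
  -- product representation of the two probabilities
  have hmapXY := (ProbabilityTheory.indepFun_iff_map_prod_eq_prod_map_map
    hX.aemeasurable hY.aemeasurable).mp hXY
  have hmapXV := (ProbabilityTheory.indepFun_iff_map_prod_eq_prod_map_map
    hX.aemeasurable hV.aemeasurable).mp hXV
  have hPA : ℙ (ASet P n x Δ (m, i))
      = ∫⁻ a, (Measure.map (f m) ℙ) (Prod.mk a ⁻¹' S) ∂(Measure.map X ℙ) := by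
    rw [hAS, ← Measure.map_apply (hX.prodMk hY) hS, hmapXY, Measure.prod_apply hS]
  have hPB : ℙ (BSet P n x Δ (m, i))
      = ∫⁻ a, (Measure.map V ℙ) (Prod.mk a ⁻¹' S') ∂(Measure.map X ℙ) := by
    rw [hBS, ← Measure.map_apply (hX.prodMk hV) hS', hmapXV, Measure.prod_apply hS']
  -- the pointwise change-of-measure identity for the sections
  have hpt : ∀ a : ℕ × ℝ, (Measure.map (f m) ℙ) (Prod.mk a ⁻¹' S)
      = ENNReal.ofReal (Q P) * (Measure.map V ℙ) (Prod.mk a ⁻¹' S') := by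
    intro a
    by_cases hcase : a.1 + i = n
    · set s : Set ℝ := (fun y => a.2 + y) ⁻¹' Set.Ico x (x + Δ) with hsdef
      have hs : MeasurableSet s := (measurable_const.add measurable_id) measurableSet_Ico
      have e1 : Prod.mk a ⁻¹' S = {b : ℕ × (ℕ → ℝ) | i + 1 ≤ b.1 ∧ b.2 i ∈ s} := by
        ext b
        simp only [hSdef, Set.mem_preimage, Set.mem_setOf_eq, hsdef, hcase, true_and]
      have e2 : Prod.mk a ⁻¹' S' = {v : ℕ × ℝ | v.1 = i ∧ v.2 ∈ s} := by
        ext v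
        simp only [hS'def, Set.mem_preimage, Set.mem_setOf_eq, hsdef, hcase, true_and]
      have hset1 : MeasurableSet {b : ℕ × (ℕ → ℝ) | i + 1 ≤ b.1 ∧ b.2 i ∈ s} := by
        have h : {b : ℕ × (ℕ → ℝ) | i + 1 ≤ b.1 ∧ b.2 i ∈ s}
            = (fun b : ℕ × (ℕ → ℝ) => b.1) ⁻¹' {k | i + 1 ≤ k} ∩
              (fun b : ℕ × (ℕ → ℝ) => b.2 i) ⁻¹' s := rfl
        rw [h]
        exact (measurable_fst .of_discrete).inter
          (((measurable_pi_apply i).comp measurable_snd) hs)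
      have hset2 : MeasurableSet {v : ℕ × ℝ | v.1 = i ∧ v.2 ∈ s} := by
        have h : {v : ℕ × ℝ | v.1 = i ∧ v.2 ∈ s}
            = (fun v : ℕ × ℝ => v.1) ⁻¹' {k | k = i} ∩
              (fun v : ℕ × ℝ => v.2) ⁻¹' s := rfl
        rw [h]
        exact (measurable_fst .of_discrete).inter (measurable_snd hs)
      have hYlaw : Measure.map (f m) ℙ = Measure.map (fun ω => ((P.tauSeq 2 ω : ℕ),
          fun j : ℕ => if j ≤ P.tauSeq 2 ω then P.uSeq 2 j ω else 0)) ℙ :=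
        P.ident (m + 1) (by omega)
      have e3 : ((fun ω => ((P.tauSeq 2 ω : ℕ),
          fun j : ℕ => if j ≤ P.tauSeq 2 ω then P.uSeq 2 j ω else 0)) ⁻¹'
            {b : ℕ × (ℕ → ℝ) | i + 1 ≤ b.1 ∧ b.2 i ∈ s})
          = {ω | i + 1 ≤ P.tauSeq 2 ω ∧ P.uSeq 2 i ω ∈ s} := by
        ext ω
        simp only [Set.mem_preimage, Set.mem_setOf_eq]
        constructor
        · rintro ⟨h1, h2⟩
          rw [if_pos (by omega)] at h2
          exact ⟨h1, h2⟩
        · rintro ⟨h1, h2⟩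
          exact ⟨h1, by rw [if_pos (by omega)]; exact h2⟩
      rw [e1, e2, hYlaw, Measure.map_apply (hf_meas 1) hset1, e3,
        ← P.star_dist i s hs, Measure.map_apply hV hset2]
      rfl
    · have e1 : Prod.mk a ⁻¹' S = ∅ := by
        ext b
        simp only [hSdef, Set.mem_preimage, Set.mem_setOf_eq, Set.mem_empty_iff_false,
          iff_false]
        rintro ⟨h1, -⟩
        exact hcase h1
      have e2 : Prod.mk a ⁻¹' S' = ∅ := by
        ext v
        simp only [hS'def, Set.mem_preimage, Set.mem_setOf_eq, Set.mem_empty_iff_false,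
          iff_false]
        rintro ⟨h1, -⟩
        exact hcase h1
      rw [e1, e2]
      simp
  rw [hPA, hPB, lintegral_congr hpt, lintegral_const_mul' _ _ ENNReal.ofReal_ne_top]

end Key

/-- **Lemma 7 (the change-of-measure identity, non-lattice form).** Under conditions
`S_I`–`S_IV`, for every `n ≥ 2`, every real `x ≥ c₁` and every `Δ > 0`,
`P(Z₊(n) + u_{ν₊(n)+1, γ₊(n)} ∈ [x, x + Δ), τ₁ ≤ n)
  = Q · P(Z*₊(n) ∈ [x, x + Δ), γ*₊(n) = 0)`. -/
theorem change_of_measure_identity {Ω : Type} [MeasureSpace Ω]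
    [IsProbabilityMeasure (ℙ : Measure Ω)]
    (P : CRP Ω) (n : ℕ) (hn : 2 ≤ n) (x : ℝ) (hx : P.c₁ ≤ x) (Δ : ℝ) (hΔ : 0 < Δ) :
    ℙ {ω | (ZP P n ω + P.uSeq (nuP P n ω + 1) (gamP P n ω) ω ∈ Set.Ico x (x + Δ)) ∧
        P.tauSeq 1 ω ≤ n}
      = ENNReal.ofReal (Q P) *
        ℙ {ω | ZPSt P n ω ∈ Set.Ico x (x + Δ) ∧ gamPSt P n ω = 0} := by
  classical
  have hdA : Set.PairwiseDisjoint
      ↑(Finset.Icc 1 n ×ˢ Finset.range (n + 1)) (ASet P n x Δ) := by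
    intro p hp q hq hpq
    refine Set.disjoint_left.mpr fun ω hωp hωq => hpq ?_
    have h1 := ASet_nu P hωp
    have h2 := ASet_nu P hωq
    exact Prod.ext (h1.1.symm.trans h2.1) (h1.2.symm.trans h2.2)
  have hdB : Set.PairwiseDisjoint
      ↑(Finset.Icc 1 n ×ˢ Finset.range (n + 1)) (BSet P n x Δ) := by
    intro p hp q hq hpq
    simp only [Finset.coe_product, Set.mem_prod, Finset.mem_coe, Finset.mem_Icc] at hp hq
    refine Set.disjoint_left.mpr fun ω hωp hωq => hpq ?_
    have h1 := BSet_nu P hp.1.1 hωp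
    have h2 := BSet_nu P hq.1.1 hωq
    have hi : p.2 = q.2 := by
      have := hωp.2.1
      have := hωq.2.1
      omega
    have hT : Tn P p.1 ω = Tn P q.1 ω := by
      have := hωp.1
      have := hωq.1
      omega
    have hfst : p.1 = q.1 := by
      by_contra hne
      rcases Nat.lt_or_ge p.1 q.1 with hlt | hge
      · exact absurd hT (Nat.ne_of_lt (Tn_strictMono P ω hlt))
      · have : q.1 < p.1 := by omega
        exact absurd hT.symm (Nat.ne_of_lt (Tn_strictMono P ω this))
    exact Prod.ext hfst hi
  rw [union_A P n hn x Δ, union_B P n hn x Δ,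
    measure_biUnion_finset hdA (fun p _ => ASet_meas P n x Δ p),
    measure_biUnion_finset hdB (fun p _ => BSet_meas P n x Δ p),
    Finset.mul_sum]
  refine Finset.sum_congr rfl fun p hp => ?_
  simp only [Finset.mem_product, Finset.mem_Icc] at hp
  obtain ⟨m, i⟩ := p
  exact key_identity P n x Δ m i hp.1.1

end CompoundRenewal
end
end

section
/- Let {X_i}_{i≥1} be a sequence of independent and identically distributed non-negative random variables, set S_n = Σ_{i=1}^n X_i (with S₀ = 0), and let N be an ℕ-valued (counting) random variable defined on the same probability space (no independence between N and {X_i} is assumed). If for some C > 0 one has E e^{C X₁} < ∞ and E e^{C N} < ∞, then there exists a constant b > 0 such that E e^{b S_N} < ∞. -/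
open MeasureTheory ProbabilityTheory Filter Real
open scoped ENNReal Topology

lemma aux_prod {Ω : Type} [MeasureSpace Ω] [IsProbabilityMeasure (ℙ : Measure Ω)]
    (Y : ℕ → Ω → ℝ) (hY : ∀ i, Measurable (Y i))
    (hInd : iIndepFun Y ℙ) (t : ℝ) :
    ∀ n, ∫⁻ ω, ENNReal.ofReal (Real.exp (t * ∑ i ∈ Finset.range n, Y i ω)) ∂ℙ
      = ∏ i ∈ Finset.range n, ∫⁻ ω, ENNReal.ofReal (Real.exp (t * Y i ω)) ∂ℙ := by
  have hφ : Measurable fun x : ℝ => ENNReal.ofReal (Real.exp (t * x)) := by fun_prop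
  intro n
  induction n with
  | zero => simp
  | succ n ih =>
    rw [Finset.prod_range_succ, ← ih]
    have hsin := (hInd.indepFun_sum_range_succ hY n).comp hφ hφ
    have hsum : Measurable (∑ j ∈ Finset.range n, Y j) := by
      have h2 : (∑ j ∈ Finset.range n, Y j) = fun ω => ∑ j ∈ Finset.range n, Y j ω := by
        ext ω; simp
      rw [h2]; exact Finset.measurable_sum _ fun i _ => hY i
    have heq := lintegral_mul_eq_lintegral_mul_lintegral_of_indepFun
      (μ := (ℙ : Measure Ω)) (hφ.comp hsum) (hφ.comp (hY n)) hsin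
    calc ∫⁻ ω, ENNReal.ofReal (Real.exp (t * ∑ i ∈ Finset.range (n+1), Y i ω)) ∂ℙ
        = ∫⁻ ω, ((fun x : ℝ => ENNReal.ofReal (Real.exp (t * x))) ∘ (∑ j ∈ Finset.range n, Y j)
            * (fun x : ℝ => ENNReal.ofReal (Real.exp (t * x))) ∘ Y n) ω ∂ℙ := by
          congr 1
          ext ω
          simp only [Pi.mul_apply, Function.comp_apply, Finset.sum_apply]
          rw [Finset.sum_range_succ, mul_add, Real.exp_add,
            ENNReal.ofReal_mul (Real.exp_nonneg _)]
      _ = (∫⁻ ω, ENNReal.ofReal (Real.exp (t * ∑ i ∈ Finset.range n, Y i ω)) ∂ℙ)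
            * ∫⁻ ω, ENNReal.ofReal (Real.exp (t * Y n ω)) ∂ℙ := by
          rw [heq]
          simp [Function.comp, Finset.sum_apply]

/-- **Lemma 9 (auxiliary).** Let `{X_i}_{i ≥ 1}` be i.i.d. non-negative random variables,
`S_n = X_1 + ⋯ + X_n` (with `S_0 = 0`), and let `N` be an `ℕ`-valued random variable on the
same probability space (no independence between `N` and `{X_i}` is assumed).  If
`E exp (C X₁) < ∞` and `E exp (C N) < ∞` for some `C > 0`, then there exists `b > 0` with
`E exp (b S_N) < ∞`. -/
theorem exp_moment_random_sum {Ω : Type} [MeasureSpace Ω]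
    [IsProbabilityMeasure (ℙ : Measure Ω)]
    (X : ℕ → Ω → ℝ) (N : Ω → ℕ)
    (hX_meas : ∀ i, Measurable (X i)) (hN_meas : Measurable N)
    (hX_nonneg : ∀ i ω, 0 ≤ X i ω)
    (hX_indep : iIndepFun (fun i : ℕ => X (i + 1)) ℙ)
    (hX_ident : ∀ i : ℕ, 1 ≤ i → Measure.map (X i) ℙ = Measure.map (X 1) ℙ)
    (C : ℝ) (hC : 0 < C)
    (hX_exp : ∫⁻ ω, ENNReal.ofReal (Real.exp (C * X 1 ω)) ∂ℙ < ⊤)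
    (hN_exp : ∫⁻ ω, ENNReal.ofReal (Real.exp (C * (N ω : ℝ))) ∂ℙ < ⊤) :
    ∃ b : ℝ, 0 < b ∧
      ∫⁻ ω, ENNReal.ofReal
        (Real.exp (b * ∑ i ∈ Finset.Icc 1 (N ω), X i ω)) ∂ℙ < ⊤ := by
  classical
  set K : ℝ≥0∞ := ∫⁻ ω, ENNReal.ofReal (Real.exp (C * X 1 ω)) ∂ℙ with hK
  set Kr : ℝ := K.toReal with hKr
  have hKr0 : 0 ≤ Kr := ENNReal.toReal_nonneg
  have hexpC : 1 < Real.exp C := Real.one_lt_exp_iff.mpr hC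
  set θ : ℝ := min 1 ((Real.exp C - 1) / (2 * (Kr + 1))) with hθ
  have hθpos : 0 < θ := lt_min one_pos (div_pos (by linarith) (by positivity))
  have hθ1 : θ ≤ 1 := min_le_left _ _
  set t : ℝ := θ * C with ht
  have htpos : 0 < t := mul_pos hθpos hC
  refine ⟨t / 2, by linarith, ?_⟩
  -- pointwise convexity bound for the mgf of X₁ at t
  have hmptw : ∀ x : ℝ, 0 ≤ x → Real.exp (t * x) ≤ (1 - θ) + θ * Real.exp (C * x) := by
    intro x hx
    have hcv := convexOn_exp.2 (Set.mem_univ (C * x)) (Set.mem_univ (0 : ℝ))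
      hθpos.le (by linarith : (0:ℝ) ≤ 1 - θ) (by ring)
    simp only [smul_eq_mul, mul_zero, add_zero, Real.exp_zero, mul_one] at hcv
    calc Real.exp (t * x) = Real.exp (θ * (C * x)) := by rw [ht]; ring_nf
      _ ≤ θ * Real.exp (C * x) + (1 - θ) := hcv
      _ = (1 - θ) + θ * Real.exp (C * x) := by ring
  -- bound on M := mgf of X₁ at t
  set M : ℝ≥0∞ := ∫⁻ ω, ENNReal.ofReal (Real.exp (t * X 1 ω)) ∂ℙ with hM
  set q : ℝ := (1 + Real.exp C) / 2 with hq
  have hθK : θ * (Kr + 1) ≤ (Real.exp C - 1) / 2 := by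
    have h1 : θ ≤ (Real.exp C - 1) / (2 * (Kr + 1)) := min_le_right _ _
    have h2 : (0:ℝ) < Kr + 1 := by linarith
    calc θ * (Kr + 1) ≤ (Real.exp C - 1) / (2 * (Kr + 1)) * (Kr + 1) := by
          exact mul_le_mul_of_nonneg_right h1 h2.le
      _ = (Real.exp C - 1) / 2 := by field_simp
  have hqle : (1 - θ) + θ * Kr ≤ q := by
    have : θ * Kr ≤ θ * (Kr + 1) := by nlinarith
    rw [hq]; nlinarith
  have hM_le : M ≤ ENNReal.ofReal q := by
    calc M ≤ ∫⁻ ω, ENNReal.ofReal ((1 - θ) + θ * Real.exp (C * X 1 ω)) ∂ℙ := by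
          apply lintegral_mono
          intro ω
          exact ENNReal.ofReal_le_ofReal (hmptw _ (hX_nonneg 1 ω))
      _ = ∫⁻ ω, (ENNReal.ofReal (1 - θ)
            + ENNReal.ofReal θ * ENNReal.ofReal (Real.exp (C * X 1 ω))) ∂ℙ := by
          congr 1; ext ω
          rw [ENNReal.ofReal_add (by linarith) (by positivity), ENNReal.ofReal_mul hθpos.le]
      _ = ENNReal.ofReal (1 - θ) + ENNReal.ofReal θ * K := by
          rw [lintegral_add_left measurable_const, lintegral_const,
            lintegral_const_mul _ (by fun_prop), measure_univ, mul_one]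
      _ = ENNReal.ofReal (1 - θ) + ENNReal.ofReal θ * ENNReal.ofReal Kr := by
          rw [hKr, ENNReal.ofReal_toReal hX_exp.ne]
      _ = ENNReal.ofReal ((1 - θ) + θ * Kr) := by
          rw [← ENNReal.ofReal_mul hθpos.le, ← ENNReal.ofReal_add (by linarith) (by positivity)]
      _ ≤ ENNReal.ofReal q := ENNReal.ofReal_le_ofReal hqle
  -- geometric ratio
  set ρ : ℝ := q * Real.exp (-C) with hρ
  have hρ1 : ρ < 1 := by
    have h1 : Real.exp (-C) = (Real.exp C)⁻¹ := Real.exp_neg C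
    have h2 : (0:ℝ) < Real.exp C := Real.exp_pos C
    have h3 : (Real.exp C)⁻¹ < 1 := inv_lt_one_of_one_lt₀ hexpC
    have h4 : Real.exp C * (Real.exp C)⁻¹ = 1 := mul_inv_cancel₀ h2.ne'
    rw [hρ, hq, h1]
    nlinarith
  -- bound on mgf of partial sums
  have haux := aux_prod (fun i => X (i + 1)) (fun i => hX_meas (i + 1)) hX_indep t
  have hident : ∀ i : ℕ, (∫⁻ ω, ENNReal.ofReal (Real.exp (t * X (i + 1) ω)) ∂ℙ) = M := by
    intro i
    have hφ : Measurable fun x : ℝ => ENNReal.ofReal (Real.exp (t * x)) := by fun_prop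
    rw [hM, ← lintegral_map hφ (hX_meas (i + 1)), ← lintegral_map hφ (hX_meas 1),
      hX_ident (i + 1) (by omega)]
  have hMn : ∀ n : ℕ, ∫⁻ ω, ENNReal.ofReal (Real.exp (t * ∑ i ∈ Finset.range n, X (i + 1) ω)) ∂ℙ
      ≤ ENNReal.ofReal q ^ n := by
    intro n
    rw [haux n]
    calc (∏ i ∈ Finset.range n, ∫⁻ ω, ENNReal.ofReal (Real.exp (t * X (i + 1) ω)) ∂ℙ)
        = M ^ n := by
          rw [Finset.prod_congr rfl fun i _ => hident i, Finset.prod_const, Finset.card_range]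
      _ ≤ ENNReal.ofReal q ^ n := pow_le_pow_left₀ zero_le hM_le n
  -- pointwise AM-GM bound
  have hptw : ∀ ω, ENNReal.ofReal (Real.exp (t / 2 * ∑ i ∈ Finset.Icc 1 (N ω), X i ω))
      ≤ ENNReal.ofReal (Real.exp (t * (∑ i ∈ Finset.Icc 1 (N ω), X i ω) - C * (N ω : ℝ)))
        + ENNReal.ofReal (Real.exp (C * (N ω : ℝ))) := by
    intro ω
    set s : ℝ := ∑ i ∈ Finset.Icc 1 (N ω), X i ω
    set n : ℝ := (N ω : ℝ)
    have key : Real.exp (t / 2 * s) ≤ Real.exp (t * s - C * n) + Real.exp (C * n) := by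
      have h1 : Real.exp (t / 2 * s)
          = Real.exp ((t * s - C * n) / 2) * Real.exp (C * n / 2) := by
        rw [← Real.exp_add]; ring_nf
      have h2 : ∀ u v : ℝ, 0 ≤ u → 0 ≤ v → u * v ≤ u ^ 2 + v ^ 2 := by
        intro u v hu hv; nlinarith [sq_nonneg (u - v)]
      have h3 : Real.exp ((t * s - C * n) / 2) ^ 2 = Real.exp (t * s - C * n) := by
        rw [sq, ← Real.exp_add]; ring_nf
      have h4 : Real.exp (C * n / 2) ^ 2 = Real.exp (C * n) := by
        rw [sq, ← Real.exp_add]; ring_nf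
      calc Real.exp (t / 2 * s) = Real.exp ((t * s - C * n) / 2) * Real.exp (C * n / 2) := h1
        _ ≤ Real.exp ((t * s - C * n) / 2) ^ 2 + Real.exp (C * n / 2) ^ 2 :=
            h2 _ _ (Real.exp_nonneg _) (Real.exp_nonneg _)
        _ = Real.exp (t * s - C * n) + Real.exp (C * n) := by rw [h3, h4]
    calc ENNReal.ofReal (Real.exp (t / 2 * s))
        ≤ ENNReal.ofReal (Real.exp (t * s - C * n) + Real.exp (C * n)) :=
          ENNReal.ofReal_le_ofReal key
      _ = _ := ENNReal.ofReal_add (Real.exp_nonneg _) (Real.exp_nonneg _)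
  -- decomposition of the first integral
  have hdecomp : ∀ ω, ENNReal.ofReal
      (Real.exp (t * (∑ i ∈ Finset.Icc 1 (N ω), X i ω) - C * (N ω : ℝ)))
      = ∑' n : ℕ, Set.indicator {ω' | N ω' = n}
          (fun ω' => ENNReal.ofReal
            (Real.exp (t * (∑ i ∈ Finset.range n, X (i + 1) ω') - C * (n : ℝ)))) ω := by
    intro ω
    rw [tsum_eq_single (N ω)]
    · rw [Set.indicator_of_mem (by exact rfl : ω ∈ {ω' | N ω' = N ω})]
      congr 2
      rw [← Finset.Ico_add_one_right_eq_Icc, Finset.sum_Ico_eq_sum_range]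
      simp [add_comm]
    · intro m hm
      exact Set.indicator_of_notMem (by exact fun h => hm (h.symm ▸ rfl)) _
  -- main estimate
  have hmeas_term : ∀ n : ℕ, Measurable
      (fun ω' => ENNReal.ofReal
        (Real.exp (t * (∑ i ∈ Finset.range n, X (i + 1) ω') - C * (n : ℝ)))) := by
    intro n
    apply Measurable.ennreal_ofReal
    apply Real.measurable_exp.comp
    apply Measurable.sub _ measurable_const
    exact measurable_const.mul (Finset.measurable_sum _ fun i _ => hX_meas (i + 1))
  have hterm_le : ∀ n : ℕ,
      (∫⁻ ω, Set.indicator {ω' | N ω' = n}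
        (fun ω' => ENNReal.ofReal
          (Real.exp (t * (∑ i ∈ Finset.range n, X (i + 1) ω') - C * (n : ℝ)))) ω ∂ℙ)
      ≤ ENNReal.ofReal ρ ^ n := by
    intro n
    calc (∫⁻ ω, Set.indicator {ω' | N ω' = n}
          (fun ω' => ENNReal.ofReal
            (Real.exp (t * (∑ i ∈ Finset.range n, X (i + 1) ω') - C * (n : ℝ)))) ω ∂ℙ)
        ≤ ∫⁻ ω, ENNReal.ofReal
            (Real.exp (t * (∑ i ∈ Finset.range n, X (i + 1) ω) - C * (n : ℝ))) ∂ℙ :=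
          lintegral_mono fun ω => Set.indicator_le_self _ _ ω
      _ = ∫⁻ ω, ENNReal.ofReal (Real.exp (t * ∑ i ∈ Finset.range n, X (i + 1) ω))
            * ENNReal.ofReal (Real.exp (-C) ^ n) ∂ℙ := by
          congr 1; ext ω
          rw [← ENNReal.ofReal_mul (Real.exp_nonneg _), ← Real.exp_nat_mul, ← Real.exp_add]
          congr 2
          push_cast
          ring
      _ = (∫⁻ ω, ENNReal.ofReal (Real.exp (t * ∑ i ∈ Finset.range n, X (i + 1) ω)) ∂ℙ)
            * ENNReal.ofReal (Real.exp (-C) ^ n) :=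
          lintegral_mul_const' _ _ ENNReal.ofReal_ne_top
      _ ≤ ENNReal.ofReal q ^ n * ENNReal.ofReal (Real.exp (-C)) ^ n := by
          rw [← ENNReal.ofReal_pow (Real.exp_nonneg _)]
          exact mul_le_mul_left (hMn n) _
      _ = ENNReal.ofReal ρ ^ n := by
          rw [← mul_pow, ← ENNReal.ofReal_mul (by positivity)]
  calc ∫⁻ ω, ENNReal.ofReal (Real.exp (t / 2 * ∑ i ∈ Finset.Icc 1 (N ω), X i ω)) ∂ℙ
      ≤ ∫⁻ ω, (ENNReal.ofReal
          (Real.exp (t * (∑ i ∈ Finset.Icc 1 (N ω), X i ω) - C * (N ω : ℝ)))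
          + ENNReal.ofReal (Real.exp (C * (N ω : ℝ)))) ∂ℙ := lintegral_mono hptw
    _ = (∫⁻ ω, ENNReal.ofReal
          (Real.exp (t * (∑ i ∈ Finset.Icc 1 (N ω), X i ω) - C * (N ω : ℝ))) ∂ℙ)
          + ∫⁻ ω, ENNReal.ofReal (Real.exp (C * (N ω : ℝ))) ∂ℙ :=
        lintegral_add_right _ (by fun_prop)
    _ < ⊤ := by
        apply ENNReal.add_lt_top.mpr
        refine ⟨?_, hN_exp⟩
        rw [lintegral_congr hdecomp]
        rw [lintegral_tsum fun n => ((hmeas_term n).indicator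
          (show MeasurableSet {ω' | N ω' = n} from hN_meas (measurableSet_singleton n))).aemeasurable]
        calc (∑' n : ℕ, ∫⁻ ω, Set.indicator {ω' | N ω' = n}
              (fun ω' => ENNReal.ofReal
                (Real.exp (t * (∑ i ∈ Finset.range n, X (i + 1) ω') - C * (n : ℝ)))) ω ∂ℙ)
            ≤ ∑' n : ℕ, ENNReal.ofReal ρ ^ n := ENNReal.tsum_le_tsum hterm_le
          _ = (1 - ENNReal.ofReal ρ)⁻¹ := ENNReal.tsum_geometric _
          _ < ⊤ := by
              rw [ENNReal.inv_lt_top]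
              rw [tsub_pos_iff_lt]
              exact ENNReal.ofReal_lt_one.mpr hρ1
end

section
/- Under the standing assumptions and the admissibility condition γ⁺·ess inf v⁺ < c₂ ≤ c₁ < γ⁺·V on the constants c₁ ≥ c₂ > 0, the following decomposition holds almost surely: for all integers n ≥ 0 and m ≥ 0, if Γ_m ≤ n, then w_{0,n} = w_{0,Γ₀} + w_{Γ₀,Γ₁} + ⋯ + w_{Γ_{m−1},Γ_m} + w_{Γ_m,n} (with the convention w_{j,j} = 0). -/
open MeasureTheory ProbabilityTheory Filter Real Set
open scoped ENNReal Topology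

noncomputable section

namespace MaxPathWeight

def IsPath (j k : ℤ) (p : List ℤ) : Prop :=
  p.Chain' (· < ·) ∧ p.head? = some j ∧ p.getLast? = some k

def edges (p : List ℤ) : List (ℤ × ℤ) := p.zip p.tail

structure EdgeData (Ω : Type) [MeasureSpace Ω] where
  v : ℤ → ℤ → Ω → EReal
  v_meas : ∀ j k, Measurable (v j k)
  v_ne_top : ∀ j k ω, v j k ω ≠ ⊤
  v_indep : iIndepFun
    (fun e : {e : ℤ × ℤ // e.1 < e.2} => v e.1.1 e.1.2) ℙ
  v_ident : ∀ j k : ℤ, j < k → Measure.map (v j k) ℙ = Measure.map (v 0 1) ℙ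
  vp : ℤ → ℤ → Ω → ℝ
  vp_meas : ∀ j k, Measurable (vp j k)
  vp_pos : ∀ j k ω, 0 < vp j k ω
  vp_couple : ∀ j k ω, 0 < v j k ω → (vp j k ω : EReal) = v j k ω
  vp_indep : iIndepFun
    (fun e : {e : ℤ × ℤ // e.1 < e.2} => vp e.1.1 e.1.2) ℙ
  vp_dist : ∀ j k : ℤ, j < k → ∀ s : Set ℝ, MeasurableSet s →
    ℙ {ω | vp j k ω ∈ s} * ℙ {ω | 0 < v 0 1 ω}
      = ℙ {ω | 0 < v 0 1 ω ∧ (v 0 1 ω).toReal ∈ s}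
  pos_prob : 0 < ℙ {ω | 0 < v 0 1 ω}
  nondeg : ∀ c : ℝ, 0 < c → ℙ {ω | vp 0 1 ω = c} < 1
  exp_moment : ∃ C : ℝ, 0 < C ∧
    ∫⁻ ω, ENNReal.ofReal (Real.exp (C * vp 0 1 ω)) ∂ℙ < ⊤

variable {Ω : Type} [MeasureSpace Ω]

def pathWeight (M : EdgeData Ω) (p : List ℤ) (ω : Ω) : EReal :=
  ((edges p).map fun e => M.v e.1 e.2 ω).sum

def posOnPath (M : EdgeData Ω) (p : List ℤ) (ω : Ω) : Prop :=
  ∀ e ∈ edges p, 0 < M.v e.1 e.2 ω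

def w (M : EdgeData Ω) (j k : ℤ) (ω : Ω) : EReal :=
  if j = k then 0 else sSup {x | ∃ p, IsPath j k p ∧ pathWeight M p ω = x}

def wp (M : EdgeData Ω) (j k : ℤ) (ω : Ω) : EReal :=
  sSup {x | ∃ p, IsPath j k p ∧ posOnPath M p ω ∧ pathWeight M p ω = x}

def IsSkeletonPlus (M : EdgeData Ω) (x : ℤ) (ω : Ω) : Prop :=
  ∀ j k : ℤ, j < x → x < k →
    (∃ p, IsPath j x p ∧ posOnPath M p ω) ∧ (∃ p, IsPath x k p ∧ posOnPath M p ω)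

def Ar (M : EdgeData Ω) (c : ℝ) (x : ℤ) (ω : Ω) : Prop :=
  ∀ i : ℕ, 1 ≤ i → ((c * i : ℝ) : EReal) ≤ w M x (x + i) ω

def Al (M : EdgeData Ω) (c : ℝ) (x : ℤ) (ω : Ω) : Prop :=
  ∀ j : ℕ, 1 ≤ j → ((c * j : ℝ) : EReal) ≤ w M (x - j) x ω

def A0 (M : EdgeData Ω) (c : ℝ) (x : ℤ) (ω : Ω) : Prop :=
  ∀ i j : ℕ, 1 ≤ i → 1 ≤ j → M.v (x - j) (x + i) ω < ((c * (i + j) : ℝ) : EReal)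

def ArP (M : EdgeData Ω) (c : ℝ) (x : ℤ) (ω : Ω) : Prop :=
  ∀ i : ℕ, 1 ≤ i → ((c * i : ℝ) : EReal) ≤ wp M x (x + i) ω

def AlP (M : EdgeData Ω) (c : ℝ) (x : ℤ) (ω : Ω) : Prop :=
  ∀ j : ℕ, 1 ≤ j → ((c * j : ℝ) : EReal) ≤ wp M (x - j) x ω

def IsRenewal (M : EdgeData Ω) (c₁ c₂ : ℝ) (x : ℤ) (ω : Ω) : Prop :=
  Al M c₁ x ω ∧ A0 M c₂ x ω ∧ Ar M c₁ x ω

def IsRenewalPlus (M : EdgeData Ω) (c₁ c₂ : ℝ) (x : ℤ) (ω : Ω) : Prop :=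
  AlP M c₁ x ω ∧ A0 M c₂ x ω ∧ ArP M c₁ x ω

/-- The edge model together with a measurable enumeration `tp` of the (a.s. infinite) set of
skeleton-plus vertices: `⋯ < t⁺₋₁ < 0 ≤ t⁺₀ < t⁺₁ < ⋯`. -/
structure EdgeModel (Ω : Type) [MeasureSpace Ω] extends EdgeData Ω where
  tp : ℤ → Ω → ℤ
  tp_meas : ∀ k, Measurable (tp k)
  tp_spec : ∀ᵐ ω ∂ℙ, StrictMono (fun k => tp k ω) ∧ tp (-1) ω < 0 ∧ 0 ≤ tp 0 ω ∧
    (∀ k : ℤ, IsSkeletonPlus toEdgeData (tp k ω) ω) ∧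
    (∀ x : ℤ, IsSkeletonPlus toEdgeData x ω → ∃ k, tp k ω = x)

/-- `γ⁺ = 1 / E (t⁺₁ - t⁺₀)`. -/
def gammaP (M : EdgeModel Ω) : ℝ := (∫ ω, ((M.tp 1 ω - M.tp 0 ω : ℤ) : ℝ) ∂ℙ)⁻¹

/-- `V = E min { v⁺_{i j} : t⁺₀ ≤ i < j ≤ t⁺₁ }`. -/
def Vconst (M : EdgeModel Ω) : ℝ :=
  ∫ ω, sInf {r : ℝ | ∃ i j : ℤ, M.tp 0 ω ≤ i ∧ i < j ∧ j ≤ M.tp 1 ω ∧ M.vp i j ω = r} ∂ℙ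

/-- `ess inf v⁺ = inf {t > 0 : P(v⁺ < t) > 0}`. -/
def essInfVP (M : EdgeModel Ω) : ℝ :=
  sInf {t : ℝ | 0 < t ∧ 0 < ℙ {ω | M.vp 0 1 ω < t}}

/-- Admissibility of the constants `c₁ ≥ c₂ > 0`:
`γ⁺ · ess inf v⁺ < c₂ ≤ c₁ < γ⁺ · V`. -/
def Admissible (M : EdgeModel Ω) (c₁ c₂ : ℝ) : Prop :=
  0 < c₂ ∧ c₂ ≤ c₁ ∧ gammaP M * essInfVP M < c₂ ∧ c₁ < gammaP M * Vconst M

/-- The full renewal setting: the edge model, admissible constants `c₁ ≥ c₂ > 0`, and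
measurable enumerations `Γ` of the renewal vertices and `Γp` of the renewal-plus vertices. -/
structure RenewalSetting (Ω : Type) [MeasureSpace Ω] extends EdgeModel Ω where
  c₁ : ℝ
  c₂ : ℝ
  adm : Admissible toEdgeModel c₁ c₂
  Γ : ℤ → Ω → ℤ
  Γ_meas : ∀ k, Measurable (Γ k)
  Γ_spec : ∀ᵐ ω ∂ℙ, StrictMono (fun k => Γ k ω) ∧ Γ (-1) ω < 0 ∧ 0 ≤ Γ 0 ω ∧
    (∀ k : ℤ, IsRenewal toEdgeData c₁ c₂ (Γ k ω) ω) ∧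
    (∀ x : ℤ, IsRenewal toEdgeData c₁ c₂ x ω → ∃ k, Γ k ω = x)
  Γp : ℤ → Ω → ℤ
  Γp_meas : ∀ k, Measurable (Γp k)
  Γp_spec : ∀ᵐ ω ∂ℙ, StrictMono (fun k => Γp k ω) ∧ Γp (-1) ω < 0 ∧ 0 ≤ Γp 0 ω ∧
    (∀ k : ℤ, IsRenewalPlus toEdgeData c₁ c₂ (Γp k ω) ω) ∧
    (∀ x : ℤ, IsRenewalPlus toEdgeData c₁ c₂ x ω → ∃ k, Γp k ω = x)

/-- `τ = Γ₁ - Γ₀`, a representative of the common cycle-length distribution. -/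
def tau (S : RenewalSetting Ω) (ω : Ω) : ℤ := S.Γ 1 ω - S.Γ 0 ω

/-- `ζ = w_{Γ₀, Γ₁}`, a representative of the common cycle-weight distribution. -/
def zeta (S : RenewalSetting Ω) (ω : Ω) : ℝ :=
  (w S.toEdgeData (S.Γ 0 ω) (S.Γ 1 ω) ω).toReal

/-- `A(λ, μ) = ln E exp (λ τ + μ ζ)`. -/
def Afun (S : RenewalSetting Ω) (l m : ℝ) : ℝ :=
  Real.log (∫ ω, Real.exp (l * (tau S ω : ℝ) + m * zeta S ω) ∂ℙ)

/-- The rate function `D(α) = sup {λ + μ α : A(λ, μ) ≤ 0}`. -/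
def Dfun (S : RenewalSetting Ω) (α : ℝ) : ℝ :=
  sSup {x : ℝ | ∃ l m : ℝ, Afun S l m ≤ 0 ∧ x = l + m * α}

/-- `a = E ζ / E τ`. -/
def aC (S : RenewalSetting Ω) : ℝ :=
  (∫ ω, zeta S ω ∂ℙ) / (∫ ω, (tau S ω : ℝ) ∂ℙ)

/-- `σ² = E (ζ - a τ)² / E τ`. -/
def sigmaSq (S : RenewalSetting Ω) : ℝ :=
  (∫ ω, (zeta S ω - aC S * (tau S ω : ℝ)) ^ 2 ∂ℙ) / (∫ ω, (tau S ω : ℝ) ∂ℙ)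

/-- `σ`. -/
def sigmaC (S : RenewalSetting Ω) : ℝ := Real.sqrt (sigmaSq S)

/-- Condition `[Z]` : `v` is integer-valued, and the gcd of `{k ≥ 1 : P(v = k) > 0}` is `1`. -/
def CondZ (M : EdgeData Ω) : Prop :=
  ℙ {ω | M.v 0 1 ω = ⊥ ∨ ∃ m : ℤ, M.v 0 1 ω = ((m : ℝ) : EReal)} = 1 ∧
  ∀ d : ℕ, (∀ k : ℕ, 1 ≤ k → 0 < ℙ {ω | M.v 0 1 ω = ((k : ℝ) : EReal)} → d ∣ k) → d = 1

/-- Condition `[R]` : the distribution of `v` is non-lattice. -/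
def CondR (M : EdgeData Ω) : Prop :=
  ∀ a h : ℝ, 0 < h → (∑' s : ℤ, ℙ {ω | M.v 0 1 ω = ((a + s * h : ℝ) : EReal)}) < 1



section PathLemmas

lemma edges_cons_cons (a b : ℤ) (l : List ℤ) :
    edges (a :: b :: l) = (a, b) :: edges (b :: l) := rfl

lemma edges_append (l₁ l₂ : List ℤ) (x : ℤ) (h : l₁.getLast? = some x) :
    edges (l₁ ++ l₂) = edges l₁ ++ edges (x :: l₂) := by
  induction l₁ with
  | nil => simp at h
  | cons a t ih =>
    cases t with
    | nil => simp at h; subst h; rfl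
    | cons b t' =>
      have h' : (b :: t').getLast? = some x := by
        rwa [List.getLast?_cons_cons] at h
      show (a, b) :: edges (b :: t' ++ l₂) = ((a,b) :: edges (b :: t')) ++ edges (x :: l₂)
      rw [ih h']
      rfl

lemma IsPath.ne_nil {j k : ℤ} {p : List ℤ} (h : IsPath j k p) : p ≠ [] := by
  intro hn; subst hn; simp [IsPath] at h

lemma isPath_concat {j x k : ℤ} {p q : List ℤ} (hp : IsPath j x p) (hq : IsPath x k q) :
    IsPath j k (p ++ q.tail) ∧ edges (p ++ q.tail) = edges p ++ edges q := by
  obtain ⟨c1, h1, l1⟩ := hp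
  obtain ⟨c2, h2, l2⟩ := hq
  cases q with
  | nil => simp at h2
  | cons y t =>
    have hy : x = y := by simpa using h2.symm
    subst hy
    have hedges : edges (p ++ t) = edges p ++ edges (x :: t) := edges_append p t x l1
    refine ⟨⟨?_, ?_, ?_⟩, hedges⟩
    · refine List.isChain_append.mpr ⟨c1, c2.tail, ?_⟩
      intro a ha b hb
      have ha' : a = x := by rw [l1] at ha; exact (by simpa using ha : x = a).symm
      subst ha'
      exact (List.isChain_cons.mp c2).1 b hb
    · cases p with
      | nil => simp at l1
      | cons a p' => simpa using h1
    · cases t with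
      | nil =>
        simp only [List.tail_cons, List.append_nil]
        rw [l1]
        simpa using l2
      | cons b t' =>
        simp only [List.tail_cons]
        rw [List.getLast?_append_of_ne_nil _ (by simp)]
        rwa [List.getLast?_cons_cons] at l2

lemma isPath_split {j k x : ℤ} {p : List ℤ} (hp : IsPath j k p) (hx : x ∈ p) :
    ∃ p₁ p₂, IsPath j x p₁ ∧ IsPath x k p₂ ∧ edges p = edges p₁ ++ edges p₂ := by
  obtain ⟨c, h1, l1⟩ := hp
  obtain ⟨s, t, rfl⟩ := List.append_of_mem hx
  refine ⟨s ++ [x], x :: t, ⟨?_, ?_, List.getLast?_concat⟩, ⟨?_, rfl, ?_⟩, ?_⟩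
  · refine c.sublist ?_
    rw [show s ++ x :: t = (s ++ [x]) ++ t by simp]
    exact List.sublist_append_left _ _
  · cases s with
    | nil => simpa using h1
    | cons a s' => simpa using h1

  · exact c.sublist (List.sublist_append_right s (x :: t))
  · cases t with
    | nil => simpa [List.getLast?_concat] using l1
    | cons b t' =>
      rw [List.getLast?_append_of_ne_nil _ (by simp)] at l1
      simpa using l1
  · have : s ++ x :: t = (s ++ [x]) ++ t := by simp
    rw [this, edges_append _ _ x (List.getLast?_concat)]

end PathLemmas


lemma exists_crossing {k x : ℤ} : ∀ {p : List ℤ} {j : ℤ}, IsPath j k p → j < x → x < k →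
    x ∉ p → ∃ s a b t, p = s ++ a :: b :: t ∧ a < x ∧ x < b := by
  intro p
  induction p with
  | nil => intro j hp _ _ _; exact absurd hp.2.1 (by simp)
  | cons a t ih =>
    intro j hp hj hk hx
    obtain ⟨c, h1, l1⟩ := hp
    have ha : a = j := by simpa using h1
    cases t with
    | nil =>
      have hak : a = k := by simpa using l1
      omega
    | cons b t' =>
      have hab : a < b := (List.isChain_cons_cons.mp c).1
      by_cases hbx : x < b
      · exact ⟨[], a, b, t', rfl, by omega, hbx⟩
      · have hbne : b ≠ x := fun h => hx (by simp [h])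
        have hbx' : b < x := lt_of_le_of_ne (not_lt.mp hbx) hbne
        have hpt : IsPath b k (b :: t') :=
          ⟨(List.isChain_cons_cons.mp c).2, rfl, by rwa [List.getLast?_cons_cons] at l1⟩
        obtain ⟨s, a', b', t'', heq, h1', h2'⟩ :=
          ih hpt hbx' hk (fun hm => hx (List.mem_cons_of_mem _ hm))
        exact ⟨a :: s, a', b', t'', by rw [heq]; rfl, h1', h2'⟩

variable {M : EdgeData Ω} {ω : Ω}

lemma pathWeight_split {p p₁ p₂ : List ℤ} (h : edges p = edges p₁ ++ edges p₂) :
    pathWeight M p ω = pathWeight M p₁ ω + pathWeight M p₂ ω := by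
  unfold pathWeight
  rw [h, List.map_append, List.sum_append]

lemma pathWeight_le_w {j k : ℤ} (hjk : j ≠ k) {p : List ℤ} (hp : IsPath j k p) :
    pathWeight M p ω ≤ w M j k ω := by
  rw [w, if_neg hjk]
  exact le_sSup ⟨p, hp, rfl⟩

lemma w_add_w_le {j x k : ℤ} (h1 : j < x) (h2 : x < k) :
    w M j x ω + w M x k ω ≤ w M j k ω := by
  apply EReal.add_le_of_forall_lt
  intro a ha b hb
  rw [w, if_neg h1.ne] at ha
  rw [w, if_neg h2.ne] at hb
  obtain ⟨_, ⟨p, hp, rfl⟩, hap⟩ := lt_sSup_iff.mp ha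
  obtain ⟨_, ⟨q, hq, rfl⟩, hbq⟩ := lt_sSup_iff.mp hb
  obtain ⟨hpq, he⟩ := isPath_concat hp hq
  calc a + b ≤ pathWeight M p ω + pathWeight M q ω := (EReal.add_lt_add hap hbq).le
  _ = pathWeight M (p ++ q.tail) ω := (pathWeight_split he).symm
  _ ≤ w M j k ω := pathWeight_le_w (h1.trans h2).ne hpq

lemma pathWeight_le_add {c₁ c₂ : ℝ} (hc : c₂ ≤ c₁) {x j k : ℤ}
    (hAl : Al M c₁ x ω) (hA0 : A0 M c₂ x ω) (hAr : Ar M c₁ x ω)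
    (h1 : j < x) (h2 : x < k) {p : List ℤ} (hp : IsPath j k p) :
    pathWeight M p ω ≤ w M j x ω + w M x k ω := by
  by_cases hx : x ∈ p
  · obtain ⟨p₁, p₂, hp₁, hp₂, he⟩ := isPath_split hp hx
    rw [pathWeight_split he]
    exact add_le_add (pathWeight_le_w h1.ne hp₁) (pathWeight_le_w h2.ne hp₂)
  · obtain ⟨s, a, b, t, rfl, hax, hxb⟩ := exists_crossing hp h1 h2 hx
    obtain ⟨c, hh1, hl1⟩ := hp
    -- the prefix path from j to a and suffix path from b to k
    have hPa : IsPath j a (s ++ [a]) := by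
      refine ⟨c.sublist ?_, ?_, List.getLast?_concat⟩
      · have : s ++ a :: b :: t = (s ++ [a]) ++ b :: t := by simp
        rw [this]; exact List.sublist_append_left _ _
      · cases s with
        | nil => simpa using hh1
        | cons a' s' => simpa using hh1
    have hQb : IsPath b k (b :: t) := by
      refine ⟨c.sublist ?_, rfl, ?_⟩
      · have : s ++ a :: b :: t = (s ++ [a]) ++ b :: t := by simp
        rw [this]; exact List.sublist_append_right _ _
      · rw [List.getLast?_append_of_ne_nil _ (by simp), List.getLast?_cons_cons] at hl1
        exact hl1
    have hedge : edges (s ++ a :: b :: t)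
        = edges (s ++ [a]) ++ ((a, b) :: edges (b :: t)) := by
      have h' : s ++ a :: b :: t = (s ++ [a]) ++ b :: t := by simp
      rw [h', edges_append _ _ a (List.getLast?_concat)]
      rfl
    set J : ℕ := (x - a).toNat with hJdef
    set I : ℕ := (b - x).toNat with hIdef
    have hJ : (J : ℤ) = x - a := Int.toNat_of_nonneg (by omega)
    have hI : (I : ℤ) = b - x := Int.toNat_of_nonneg (by omega)
    have hJ1 : 1 ≤ J := by omega
    have hI1 : 1 ≤ I := by omega
    have hxa : x - (J : ℤ) = a := by omega
    have hxb' : x + (I : ℤ) = b := by omega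
    -- the crossing edge weight is bounded
    have hva : M.v a b ω < ((c₂ * ((I : ℝ) + (J : ℝ)) : ℝ) : EReal) := by
      have := hA0 I J hI1 hJ1
      rwa [hxa, hxb'] at this
    obtain ⟨r, hr1, hr2⟩ := EReal.lt_iff_exists_real_btwn.mp hva
    have hr2' : r < c₁ * (J : ℝ) + c₁ * (I : ℝ) := by
      have h2' : c₂ * ((I : ℝ) + (J : ℝ)) ≤ c₁ * (J : ℝ) + c₁ * (I : ℝ) := by
        have : (0:ℝ) ≤ (I : ℝ) + (J : ℝ) := by positivity
        nlinarith
      exact lt_of_lt_of_le (by exact_mod_cast hr2) h2'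
    set ε : ℝ := (c₁ * (J : ℝ) + c₁ * (I : ℝ) - r) / 2 with hεdef
    have hε : 0 < ε := by simp only [hεdef]; linarith
    -- find a good path from a to x
    have hwa : ((c₁ * (J : ℝ) - ε : ℝ) : EReal) < w M a x ω := by
      refine lt_of_lt_of_le ?_ (hxa ▸ hAl J hJ1)
      exact_mod_cast (by linarith : c₁ * (J : ℝ) - ε < c₁ * (J : ℝ))
    have hwb : ((c₁ * (I : ℝ) - ε : ℝ) : EReal) < w M x b ω := by
      refine lt_of_lt_of_le ?_ (hxb' ▸ hAr I hI1)
      exact_mod_cast (by linarith : c₁ * (I : ℝ) - ε < c₁ * (I : ℝ))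
    rw [w, if_neg hax.ne] at hwa
    rw [w, if_neg hxb.ne] at hwb
    obtain ⟨_, ⟨q₁, hq₁, rfl⟩, haq⟩ := lt_sSup_iff.mp hwa
    obtain ⟨_, ⟨q₂, hq₂, rfl⟩, hbq⟩ := lt_sSup_iff.mp hwb
    have hvle : M.v a b ω ≤ pathWeight M q₁ ω + pathWeight M q₂ ω := by
      refine hr1.le.trans ?_
      have := (EReal.add_lt_add haq hbq).le
      refine le_trans ?_ this
      rw [← EReal.coe_add]
      exact_mod_cast (by linarith : r ≤ (c₁ * (J : ℝ) - ε) + (c₁ * (I : ℝ) - ε))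
    obtain ⟨hL, heL⟩ := isPath_concat hPa hq₁
    obtain ⟨hR, heR⟩ := isPath_concat hq₂ hQb
    calc pathWeight M (s ++ a :: b :: t) ω
        = pathWeight M (s ++ [a]) ω + (M.v a b ω + pathWeight M (b :: t) ω) := by
          unfold pathWeight
          rw [hedge, List.map_append, List.sum_append, List.map_cons, List.sum_cons]
      _ ≤ pathWeight M (s ++ [a]) ω
            + ((pathWeight M q₁ ω + pathWeight M q₂ ω) + pathWeight M (b :: t) ω) := by
          exact add_le_add_right (add_le_add_left hvle _) _
      _ = (pathWeight M (s ++ [a]) ω + pathWeight M q₁ ω)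
            + (pathWeight M q₂ ω + pathWeight M (b :: t) ω) := by
          rw [add_assoc, add_assoc]
      _ = pathWeight M ((s ++ [a]) ++ q₁.tail) ω + pathWeight M (q₂ ++ (b :: t).tail) ω := by
          rw [pathWeight_split heL, pathWeight_split heR]
      _ ≤ w M j x ω + w M x k ω :=
          add_le_add (pathWeight_le_w h1.ne hL) (pathWeight_le_w h2.ne hR)

lemma w_self (j : ℤ) : w M j j ω = 0 := by simp [w]

lemma w_split {c₁ c₂ : ℝ} (hc : c₂ ≤ c₁) {x j k : ℤ}
    (hren : IsRenewal M c₁ c₂ x ω) (hj : j ≤ x) (hk : x ≤ k) :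
    w M j k ω = w M j x ω + w M x k ω := by
  obtain ⟨hAl, hA0, hAr⟩ := hren
  rcases eq_or_lt_of_le hj with rfl | hj
  · rw [w_self, zero_add]
  rcases eq_or_lt_of_le hk with rfl | hk
  · rw [w_self, add_zero]
  refine le_antisymm ?_ (w_add_w_le hj hk)
  rw [w, if_neg (hj.trans hk).ne]
  refine sSup_le ?_
  rintro _ ⟨p, hp, rfl⟩
  exact pathWeight_le_add hc hAl hA0 hAr hj hk hp

/-- **The regenerative decomposition.** Almost surely, for all `n, m ≥ 0` with `Γ_m ≤ n`,
`w_{0,n} = w_{0,Γ₀} + w_{Γ₀,Γ₁} + ⋯ + w_{Γ_{m-1},Γ_m} + w_{Γ_m,n}`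
(with the convention `w_{j,j} = 0`). -/
theorem weight_decomposition {Ω : Type} [MeasureSpace Ω]
    [IsProbabilityMeasure (ℙ : Measure Ω)]
    (S : RenewalSetting Ω) :
    ∀ᵐ ω ∂ℙ, ∀ n m : ℕ, S.Γ (m : ℤ) ω ≤ (n : ℤ) →
      w S.toEdgeData 0 (n : ℤ) ω
        = w S.toEdgeData 0 (S.Γ 0 ω) ω
          + (∑ k ∈ Finset.range m,
              w S.toEdgeData (S.Γ (k : ℤ) ω) (S.Γ ((k : ℤ) + 1) ω) ω)
          + w S.toEdgeData (S.Γ (m : ℤ) ω) (n : ℤ) ω := by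
  have hc : S.c₂ ≤ S.c₁ := S.adm.2.1
  filter_upwards [S.Γ_spec] with ω hω
  obtain ⟨hmono, -, h0, hren, -⟩ := hω
  have key : ∀ m : ℕ, ∀ n : ℤ, S.Γ (m : ℤ) ω ≤ n →
      w S.toEdgeData 0 n ω
        = w S.toEdgeData 0 (S.Γ 0 ω) ω
          + (∑ k ∈ Finset.range m,
              w S.toEdgeData (S.Γ (k : ℤ) ω) (S.Γ ((k : ℤ) + 1) ω) ω)
          + w S.toEdgeData (S.Γ (m : ℤ) ω) n ω := by
    intro m
    induction m with
    | zero =>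
      intro n hn
      simp only [Nat.cast_zero, Finset.range_zero, Finset.sum_empty, add_zero]
      rw [Nat.cast_zero] at hn
      exact w_split hc (hren 0) h0 hn
    | succ m ih =>
      intro n hn
      have hn' : S.Γ ((m : ℤ) + 1) ω ≤ n := by push_cast at hn; exact hn
      have hmm : S.Γ (m : ℤ) ω ≤ S.Γ ((m : ℤ) + 1) ω := (hmono (lt_add_one _)).le
      have h0m : (0 : ℤ) ≤ S.Γ ((m : ℤ) + 1) ω :=
        le_trans h0 (hmono.monotone (by positivity))
      have hsplit := w_split hc (hren ((m : ℤ) + 1)) h0m hn'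
      rw [hsplit, ih _ hmm, Finset.sum_range_succ]
      push_cast
      abel
  intro n m hmn
  exact key m (n : ℤ) hmn

end MaxPathWeight
end
end
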